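/- Fix a > 0, b > 0, T_δ > 0, deadline D > 0, arrival instants 0 = s_0 < s_1 < ... < s_N < D and energies E_0,...,E_N ≥ 0, and let P : [0,D] → ℝ be feasible (nonnegative, measurable, and satisfying ∫_0^{t} a e^{bτ} P(τ) dτ ≤ T_δ e^{bt} and ∫_0^{t} P(τ) dτ ≤ Σ_{i : s_i < t} E_i for all t ∈ (0,D]). If both ∫_0^D a e^{bτ} P(τ) dτ < T_δ e^{bD} and ∫_0^D P(τ) dτ < Σ_{i=0}^{N} E_i, then there exists a feasible policy Q with ∫_0^D (1/2) log(1 + Q(τ)) dτ > ∫_0^D (1/2) log(1 + P(τ)) dτ; hence at the deadline of a throughput-optimal policy, the temperature constraint or the energy causality constraint (or both) must be tight. -/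

import Mathlib

open MeasureTheory Real Set ENNReal

lemma myIntBound {g : ℝ → ℝ} {S : Set ℝ} (hS : volume S < ⊤) {M : ℝ}
    (hb : ∀ᵐ x ∂(volume.restrict S), ‖g x‖ ≤ M) :
    (∫ x in S, g x) ≤ M * (volume S).toReal :=
  le_trans (le_abs_self _) (by rw [← Real.norm_eq_abs]; exact norm_setIntegral_le_of_norm_le_const_ae hS hb)

lemma throughput_bump (D δ c : ℝ) (P : ℝ → ℝ) (hPmeas : Measurable P)
    (hnn : ∀ τ ∈ Icc (0:ℝ) D, 0 ≤ P τ) (hδ : 0 < δ) (hδD : δ ≤ D) (hc : 0 < c)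
    (hf : IntegrableOn (fun τ => (1/2) * Real.log (1 + P τ)) (Ioc 0 D)) :
    (∫ τ in Ioc (0:ℝ) D, (1/2) * Real.log (1 + P τ)) <
      ∫ τ in Ioc (0:ℝ) D, (1/2) * Real.log (1 + (P τ + (Ioc (D-δ) D).indicator (fun _ => c) τ)) := by
  set S : Set ℝ := Ioc (D-δ) D with hSdef
  have hSsub : S ⊆ Ioc 0 D := Ioc_subset_Ioc_left (by linarith)
  set ind : ℝ → ℝ := S.indicator (fun _ => c) with hinddef
  have hind_meas : Measurable ind := measurable_const.indicator measurableSet_Ioc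
  have hind_nonneg : ∀ τ, 0 ≤ ind τ := fun τ => Set.indicator_nonneg (fun _ _ => hc.le) τ
  set h : ℝ → ℝ := fun τ =>
    (1/2) * Real.log (1 + (P τ + ind τ)) - (1/2) * Real.log (1 + P τ) with hhdef
  have hh_meas : Measurable h := by
    apply Measurable.sub
    · exact (Real.measurable_log.comp (measurable_const.add (hPmeas.add hind_meas))).const_mul _
    · exact (Real.measurable_log.comp (measurable_const.add hPmeas)).const_mul _
  have hh_nonneg : ∀ τ ∈ Ioc (0:ℝ) D, 0 ≤ h τ := by
    intro τ hτ
    have hP0 : 0 ≤ P τ := hnn τ ⟨hτ.1.le, hτ.2⟩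
    have : Real.log (1 + P τ) ≤ Real.log (1 + (P τ + ind τ)) :=
      Real.log_le_log (by linarith) (by have := hind_nonneg τ; linarith)
    simp only [hhdef]; linarith
  have hh_le : ∀ τ ∈ Ioc (0:ℝ) D, h τ ≤ (1/2) * Real.log (1 + c) := by
    intro τ hτ
    have hP0 : 0 ≤ P τ := hnn τ ⟨hτ.1.le, hτ.2⟩
    by_cases hτS : τ ∈ S
    · have hindτ : ind τ = c := Set.indicator_of_mem hτS _
      have h1 : Real.log (1 + (P τ + c)) ≤ Real.log ((1 + P τ) * (1 + c)) :=
        Real.log_le_log (by linarith) (by nlinarith)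
      have h2 : Real.log ((1 + P τ) * (1 + c)) = Real.log (1 + P τ) + Real.log (1 + c) :=
        Real.log_mul (by linarith) (by linarith)
      simp only [hhdef, hindτ]; linarith
    · have hindτ : ind τ = 0 := Set.indicator_of_notMem hτS _
      have : 0 ≤ Real.log (1 + c) := Real.log_nonneg (by linarith)
      simp only [hhdef, hindτ, add_zero, sub_self]; linarith
  have hh_int : IntegrableOn h (Ioc 0 D) := by
    apply Integrable.mono' (g := fun _ => (1/2) * Real.log (1 + c))
      (integrableOn_const (C := (1/2) * Real.log (1 + c)) measure_Ioc_lt_top.ne) hh_meas.aestronglyMeasurable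
    refine ae_restrict_of_forall_mem measurableSet_Ioc (fun τ hτ => ?_)
    rw [Real.norm_eq_abs, abs_of_nonneg (hh_nonneg τ hτ)]
    exact hh_le τ hτ
  have hpos : 0 < ∫ τ in Ioc (0:ℝ) D, h τ := by
    rw [setIntegral_pos_iff_support_of_nonneg_ae
      (ae_restrict_of_forall_mem measurableSet_Ioc hh_nonneg) hh_int]
    have hsub : S ⊆ Function.support h ∩ Ioc 0 D := by
      intro τ hτS
      refine ⟨?_, hSsub hτS⟩
      have hP0 : 0 ≤ P τ := hnn τ ⟨(hSsub hτS).1.le, (hSsub hτS).2⟩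
      have hindτ : ind τ = c := Set.indicator_of_mem hτS _
      have : Real.log (1 + P τ) < Real.log (1 + (P τ + ind τ)) := by
        apply Real.log_lt_log (by linarith); rw [hindτ]; linarith
      simp only [Function.mem_support, hhdef]
      intro hcontra; linarith [sub_eq_zero.mp hcontra]
    calc (0:ℝ≥0∞) < ENNReal.ofReal δ := by simp [hδ]
      _ = volume S := by rw [hSdef, Real.volume_Ioc]; ring_nf
      _ ≤ _ := measure_mono hsub
  have heq : ∀ τ, (1/2) * Real.log (1 + (P τ + ind τ)) =
      (1/2) * Real.log (1 + P τ) + h τ := by intro τ; simp only [hhdef]; ring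
  calc (∫ τ in Ioc (0:ℝ) D, (1/2) * Real.log (1 + P τ))
      < (∫ τ in Ioc (0:ℝ) D, (1/2) * Real.log (1 + P τ)) + ∫ τ in Ioc (0:ℝ) D, h τ := by linarith
    _ = ∫ τ in Ioc (0:ℝ) D, ((1/2) * Real.log (1 + P τ) + h τ) := (integral_add hf hh_int).symm
    _ = _ := by apply setIntegral_congr_fun measurableSet_Ioc; intro τ _; exact (heq τ).symm

lemma exists_nonint (D B : ℝ) (P : ℝ → ℝ) (hPmeas : Measurable P) (hD : 0 < D)
    (hnn : ∀ τ ∈ Icc (0:ℝ) D, 0 ≤ P τ)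
    (hbound : ∀ t ∈ Ioo (0:ℝ) D, (∫ τ in Ioc (0:ℝ) t, P τ) ≤ B)
    (hnonint : ¬ IntegrableOn P (Ioc 0 D)) :
    ∃ t₁ ∈ Ioo (0:ℝ) D, ¬ IntegrableOn P (Ioc 0 t₁) := by
  by_contra hcon
  push_neg at hcon
  apply hnonint
  have hnn' : ∀ᵐ τ ∂(volume.restrict (Ioc (0:ℝ) D)), 0 ≤ P τ :=
    ae_restrict_of_forall_mem measurableSet_Ioc (fun τ hτ => hnn τ ⟨hτ.1.le, hτ.2⟩)
  refine ⟨hPmeas.aestronglyMeasurable, ?_⟩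
  rw [hasFiniteIntegral_iff_norm]
  have hcong : ∀ᵐ τ ∂(volume.restrict (Ioc (0:ℝ) D)),
      ENNReal.ofReal ‖P τ‖ = ENNReal.ofReal (P τ) := by
    filter_upwards [hnn'] with τ hτ
    rw [Real.norm_eq_abs, abs_of_nonneg hτ]
  rw [lintegral_congr_ae hcong]
  -- reduce Ioc to Ioo
  rw [← Measure.restrict_congr_set Ioo_ae_eq_Ioc]
  set tn : ℕ → ℝ := fun n => D - D / (n + 2) with htn
  have htn_mem : ∀ n, tn n ∈ Ioo (0:ℝ) D := by
    intro n
    constructor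
    · have h1 : D / (n + 2 : ℝ) < D / 1 := by
        apply div_lt_div_of_pos_left hD (by norm_num)
        push_cast; linarith [Nat.cast_nonneg (α := ℝ) n]
      simp only [htn]; simp at h1 ⊢; linarith
    · have : 0 < D / (n + 2 : ℝ) := by positivity
      simp only [htn]; linarith
  have htn_mono : Monotone tn := by
    intro n m hnm
    have hc : (n:ℝ) + 2 ≤ (m:ℝ) + 2 := by exact_mod_cast Nat.add_le_add_right hnm 2
    have : D / (m + 2 : ℝ) ≤ D / (n + 2 : ℝ) :=
      div_le_div_of_nonneg_left hD.le (by positivity) hc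
    simp only [htn]; linarith
  set F : ℕ → ℝ → ℝ≥0∞ := fun n => (Ioc (0:ℝ) (tn n)).indicator (fun τ => ENNReal.ofReal (P τ)) with hF
  have hFmeas : ∀ n, Measurable (F n) :=
    fun n => (ENNReal.measurable_ofReal.comp hPmeas).indicator measurableSet_Ioc
  have hFmono : Monotone F := by
    intro n m hnm
    exact Set.indicator_le_indicator_of_subset (Ioc_subset_Ioc_right (htn_mono hnm)) (fun _ => zero_le)
  have hsup : ∀ x, (Ioo (0:ℝ) D).indicator (fun τ => ENNReal.ofReal (P τ)) x = ⨆ n, F n x := by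
    intro x
    by_cases hx : x ∈ Ioo (0:ℝ) D
    · rw [Set.indicator_of_mem hx]
      apply le_antisymm
      · obtain ⟨n, hn⟩ := exists_nat_ge (D / (D - x))
        have hDx : 0 < D - x := by linarith [hx.2]
        have hxle : x ≤ tn n := by
          have : D / (n + 2 : ℝ) ≤ D - x := by
            rw [div_le_iff₀ (by positivity)]
            rw [div_le_iff₀ hDx] at hn
            nlinarith [hDx]
          simp only [htn]; linarith
        have : x ∈ Ioc (0:ℝ) (tn n) := ⟨hx.1, hxle⟩
        have hFx : F n x = ENNReal.ofReal (P x) := by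
          rw [hF]; exact Set.indicator_of_mem this _
        rw [← hFx]
        exact le_iSup (fun n => F n x) n
      · exact iSup_le fun n => Set.indicator_le_self _ _ x
    · rw [Set.indicator_of_notMem hx]
      symm
      simp only [ENNReal.iSup_eq_zero]
      intro n
      apply Set.indicator_of_notMem
      intro hmem
      exact hx ⟨hmem.1, lt_of_le_of_lt hmem.2 (htn_mem n).2⟩
  calc ∫⁻ τ in Ioo (0:ℝ) D, ENNReal.ofReal (P τ)
      = ∫⁻ τ, (Ioo (0:ℝ) D).indicator (fun τ => ENNReal.ofReal (P τ)) τ := by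
        rw [lintegral_indicator measurableSet_Ioo]
    _ = ∫⁻ τ, ⨆ n, F n τ := by apply lintegral_congr; exact hsup
    _ = ⨆ n, ∫⁻ τ, F n τ := lintegral_iSup hFmeas hFmono
    _ ≤ ENNReal.ofReal B := by
        apply iSup_le
        intro n
        rw [hF]
        rw [lintegral_indicator measurableSet_Ioc]
        have hint : IntegrableOn P (Ioc 0 (tn n)) := hcon (tn n) (htn_mem n)
        have hnn'' : ∀ᵐ τ ∂(volume.restrict (Ioc (0:ℝ) (tn n))), 0 ≤ P τ :=
          ae_restrict_of_forall_mem measurableSet_Ioc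
            (fun τ hτ => hnn τ ⟨hτ.1.le, hτ.2.trans (htn_mem n).2.le⟩)
        rw [← ofReal_integral_eq_lintegral_ofReal hint hnn'']
        exact ENNReal.ofReal_le_ofReal (hbound (tn n) (htn_mem n))
    _ < ⊤ := ENNReal.ofReal_lt_top


lemma gen_bump_le {g : ℝ → ℝ} {M u v x y : ℝ} (hM : 0 ≤ M) (hxy : x ≤ y)
    (hg : ∀ τ ∈ Ioc x y, ‖g τ‖ ≤ M) :
    (∫ τ in Ioc u v, (Ioc x y).indicator g τ) ≤ M * (y - x) := by
  rw [MeasureTheory.setIntegral_indicator measurableSet_Ioc]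
  calc (∫ τ in Ioc u v ∩ Ioc x y, g τ)
      ≤ M * (volume (Ioc u v ∩ Ioc x y)).toReal := by
        apply myIntBound (lt_of_le_of_lt (measure_mono inter_subset_left) measure_Ioc_lt_top)
        exact ae_restrict_of_forall_mem (measurableSet_Ioc.inter measurableSet_Ioc)
          (fun τ hτ => hg τ hτ.2)
    _ ≤ M * (y - x) := by
        apply mul_le_mul_of_nonneg_left _ hM
        apply ENNReal.toReal_le_of_le_ofReal (by linarith)
        calc volume (Ioc u v ∩ Ioc x y) ≤ volume (Ioc x y) := measure_mono inter_subset_right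
          _ = ENNReal.ofReal (y - x) := Real.volume_Ioc

lemma bump_ind_eq (x y c : ℝ) (w : ℝ → ℝ) :
    (fun τ => w τ * (Ioc x y).indicator (fun _ => c) τ)
      = (Ioc x y).indicator (fun τ => w τ * c) := by
  funext τ
  by_cases hτ : τ ∈ Ioc x y <;>
    simp [Set.indicator_of_mem, Set.indicator_of_notMem, hτ]

lemma weighted_bump_le {a b D δ c t : ℝ} (ha : 0 < a) (hb : 0 ≤ b) (hc : 0 ≤ c) (hδ : 0 ≤ δ)
    (hδD : δ ≤ D) :
    (∫ τ in Ioc (0:ℝ) t, a * Real.exp (b*τ) * (Ioc (D-δ) D).indicator (fun _ => c) τ)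
      ≤ a * Real.exp (b*D) * c * δ := by
  rw [bump_ind_eq]
  have := gen_bump_le (g := fun τ => a * Real.exp (b*τ) * c) (M := a * Real.exp (b*D) * c)
    (u := 0) (v := t) (x := D - δ) (y := D) (by positivity) (by linarith) ?_
  · calc _ ≤ (a * Real.exp (b*D) * c) * (D - (D - δ)) := this
      _ = a * Real.exp (b*D) * c * δ := by ring
  · intro τ hτ
    rw [Real.norm_eq_abs, abs_mul, abs_mul, abs_of_pos ha, abs_of_pos (Real.exp_pos _),
      abs_of_nonneg hc]
    have h1 : Real.exp (b*τ) ≤ Real.exp (b*D) := Real.exp_le_exp.2 (mul_le_mul_of_nonneg_left hτ.2 hb)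
    exact mul_le_mul_of_nonneg_right (mul_le_mul_of_nonneg_left h1 ha.le) hc

lemma plain_bump_le {D δ c t : ℝ} (hc : 0 ≤ c) (hδ : 0 ≤ δ) (hδD : δ ≤ D) :
    (∫ τ in Ioc (0:ℝ) t, (Ioc (D-δ) D).indicator (fun _ => c) τ) ≤ c * δ := by
  have := gen_bump_le (g := fun _ : ℝ => c) (M := c)
    (u := 0) (v := t) (x := D - δ) (y := D) hc (by linarith)
    (fun τ _ => by rw [Real.norm_eq_abs, abs_of_nonneg hc])
  calc _ ≤ c * (D - (D - δ)) := this
    _ = c * δ := by ring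
def Feasible (a b Tδ D : ℝ) (N : ℕ) (s E : Fin (N + 1) → ℝ) (Q : ℝ → ℝ) : Prop :=
  (∀ t ∈ Set.Icc (0:ℝ) D, 0 ≤ Q t) ∧ Measurable Q ∧
  (∀ t ∈ Set.Ioc (0:ℝ) D,
    (∫ τ in (0:ℝ)..t, a * Real.exp (b * τ) * Q τ) ≤ Tδ * Real.exp (b * t)) ∧
  (∀ t ∈ Set.Ioc (0:ℝ) D,
    (∫ τ in (0:ℝ)..t, Q τ) ≤ ∑ i ∈ Finset.univ.filter (fun i => s i < t), E i)

set_option maxHeartbeats 2000000 in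
theorem stmt_11 (a b Tδ D : ℝ) (N : ℕ) (s E : Fin (N + 1) → ℝ)
    (ha : 0 < a) (hb : 0 < b) (hTδ : 0 < Tδ) (hD : 0 < D)
    (hs0 : s 0 = 0) (hsmono : StrictMono s) (hsD : ∀ i, s i < D)
    (hE : ∀ i, 0 ≤ E i)
    (P : ℝ → ℝ) (hP : Feasible a b Tδ D N s E P)
    (htemp : (∫ τ in (0:ℝ)..D, a * Real.exp (b * τ) * P τ) < Tδ * Real.exp (b * D))
    (henergy : (∫ τ in (0:ℝ)..D, P τ) < ∑ i, E i) :
    (∃ Q : ℝ → ℝ, Feasible a b Tδ D N s E Q ∧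
      (∫ τ in (0:ℝ)..D, (1/2) * Real.log (1 + P τ)) <
        (∫ τ in (0:ℝ)..D, (1/2) * Real.log (1 + Q τ))) ∧
    ¬ ∀ Q : ℝ → ℝ, Feasible a b Tδ D N s E Q →
      (∫ τ in (0:ℝ)..D, (1/2) * Real.log (1 + Q τ)) ≤
        (∫ τ in (0:ℝ)..D, (1/2) * Real.log (1 + P τ)) := by
  obtain ⟨hPnn, hPmeas, hPtemp, hPen⟩ := hP
  have hsmax : ∀ i, s i ≤ s (Fin.last N) := fun i => hsmono.monotone (Fin.le_last i)
  have hsmaxD : s (Fin.last N) < D := hsD _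
  have hsum_le : ∀ t : ℝ, (∑ i ∈ Finset.univ.filter (fun i => s i < t), E i) ≤ ∑ i, E i :=
    fun t => Finset.sum_le_sum_of_subset_of_nonneg (Finset.filter_subset _ _) (fun i _ _ => hE i)
  have hsum_nonneg : ∀ t : ℝ, 0 ≤ ∑ i ∈ Finset.univ.filter (fun i => s i < t), E i :=
    fun t => Finset.sum_nonneg fun i _ => hE i
  have hfilter : ∀ t : ℝ, s (Fin.last N) < t →
      (Finset.univ.filter (fun i => s i < t)) = Finset.univ := by
    intro t ht
    apply Finset.filter_true_of_mem
    intro i _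
    exact lt_of_le_of_lt (hsmax i) ht
  have main : ∃ Q : ℝ → ℝ, Feasible a b Tδ D N s E Q ∧
      (∫ τ in (0:ℝ)..D, (1/2) * Real.log (1 + P τ)) <
        (∫ τ in (0:ℝ)..D, (1/2) * Real.log (1 + Q τ)) := by
    by_cases hfint : IntegrableOn (fun τ => (1/2 : ℝ) * Real.log (1 + P τ)) (Ioc 0 D)
    · by_cases hPint : IntegrableOn P (Ioc 0 D)
      · -- CASE A
        rw [intervalIntegral.integral_of_le hD.le] at htemp henergy
        obtain ⟨η₁, hη₁def⟩ : ∃ x, x = Tδ * Real.exp (b*D) - ∫ τ in Ioc (0:ℝ) D, a * Real.exp (b*τ) * P τ := ⟨_, rfl⟩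
        have hη₁ : 0 < η₁ := hη₁def ▸ sub_pos.2 htemp
        obtain ⟨η₂, hη₂def⟩ : ∃ x, x = (∑ i, E i) - ∫ τ in Ioc (0:ℝ) D, P τ := ⟨_, rfl⟩
        have hη₂ : 0 < η₂ := hη₂def ▸ sub_pos.2 henergy
        obtain ⟨δ, hδdef⟩ : ∃ x, x = min (min (D/2) ((D - s (Fin.last N))/2)) (η₁/(2*Tδ*Real.exp (b*D)*b)) := ⟨_, rfl⟩
        have hδpos : 0 < δ := hδdef ▸ lt_min (lt_min (by positivity) (by linarith)) (by positivity)
        have hδD2 : δ ≤ D/2 := hδdef ▸ le_trans (min_le_left _ _) (min_le_left _ _)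
        have hδsmax : δ ≤ (D - s (Fin.last N))/2 := hδdef ▸ (min_le_left _ _).trans (min_le_right _ _)
        have hsmaxδ : s (Fin.last N) < D - δ := by linarith
        have hδb : Tδ * Real.exp (b*D) * b * δ ≤ η₁/2 := by
          have h : δ ≤ η₁/(2*Tδ*Real.exp (b*D)*b) := hδdef ▸ min_le_right _ _
          have h2 : (2*Tδ*Real.exp (b*D)*b) * δ ≤ (2*Tδ*Real.exp (b*D)*b) * (η₁/(2*Tδ*Real.exp (b*D)*b)) :=
            mul_le_mul_of_nonneg_left h (by positivity)
          have h3 : (2*Tδ*Real.exp (b*D)*b) * (η₁/(2*Tδ*Real.exp (b*D)*b)) = η₁ := by field_simp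
          nlinarith
        obtain ⟨c, hcdef⟩ : ∃ x, x = min (η₁/(2*(a*Real.exp (b*D))*δ)) (η₂/(2*δ)) := ⟨_, rfl⟩
        have hcpos : 0 < c := hcdef ▸ lt_min (by positivity) (by positivity)
        have hcδ₁ : a*Real.exp (b*D)*c*δ ≤ η₁/2 := by
          have h : c ≤ η₁/(2*(a*Real.exp (b*D))*δ) := hcdef ▸ min_le_left _ _
          have h2 : (2*(a*Real.exp (b*D))*δ) * c ≤ (2*(a*Real.exp (b*D))*δ) * (η₁/(2*(a*Real.exp (b*D))*δ)) :=
            mul_le_mul_of_nonneg_left h (by positivity)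
          have h3 : (2*(a*Real.exp (b*D))*δ) * (η₁/(2*(a*Real.exp (b*D))*δ)) = η₁ := by field_simp
          nlinarith
        have hcδ₂ : c*δ ≤ η₂/2 := by
          have h : c ≤ η₂/(2*δ) := hcdef ▸ min_le_right _ _
          have h2 : (2*δ) * c ≤ (2*δ) * (η₂/(2*δ)) := mul_le_mul_of_nonneg_left h (by positivity)
          have h3 : (2*δ) * (η₂/(2*δ)) = η₂ := by field_simp
          nlinarith
        obtain ⟨ind, hinddef⟩ : ∃ f : ℝ → ℝ, f = (Ioc (D-δ) D).indicator (fun _ => c) := ⟨_, rfl⟩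
        have hind_meas : Measurable ind := hinddef ▸ measurable_const.indicator measurableSet_Ioc
        have hind_nonneg : ∀ τ, 0 ≤ ind τ := fun τ => hinddef ▸ Set.indicator_nonneg (fun _ _ => hcpos.le) τ
        have hQmeas : Measurable (fun τ => P τ + ind τ) := hPmeas.add hind_meas
        have hQeqP : ∀ t : ℝ, t ≤ D - δ → EqOn (fun τ => P τ + ind τ) P (Ioc 0 t) := by
          intro t htle τ hτ
          have : ind τ = 0 := by
            rw [hinddef]
            exact Set.indicator_of_notMem (fun hmem => by linarith [hτ.2, hmem.1]) _
          simp [this]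
        have hwP_int : IntegrableOn (fun τ => a * Real.exp (b*τ) * P τ) (Ioc 0 D) := by
          apply Integrable.mono' ((hPint.abs).const_mul (a*Real.exp (b*D)))
          · exact ((measurable_const.mul
              (Real.measurable_exp.comp (measurable_const.mul measurable_id))).mul
              hPmeas).aestronglyMeasurable
          · refine ae_restrict_of_forall_mem measurableSet_Ioc (fun τ hτ => ?_)
            rw [Real.norm_eq_abs, abs_mul, abs_mul, abs_of_pos ha, abs_of_pos (Real.exp_pos _)]
            exact mul_le_mul_of_nonneg_right
              (mul_le_mul_of_nonneg_left (Real.exp_le_exp.2 (mul_le_mul_of_nonneg_left hτ.2 hb.le)) ha.le)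
              (abs_nonneg _)
        have hwP_nn : ∀ᵐ τ ∂(volume.restrict (Ioc (0:ℝ) D)), 0 ≤ a * Real.exp (b*τ) * P τ :=
          ae_restrict_of_forall_mem measurableSet_Ioc
            (fun τ hτ => mul_nonneg (by positivity) (hPnn τ ⟨hτ.1.le, hτ.2⟩))
        have hP_nn : ∀ᵐ τ ∂(volume.restrict (Ioc (0:ℝ) D)), 0 ≤ P τ :=
          ae_restrict_of_forall_mem measurableSet_Ioc (fun τ hτ => hPnn τ ⟨hτ.1.le, hτ.2⟩)
        refine ⟨fun τ => P τ + ind τ, ⟨?_, hQmeas, ?_, ?_⟩, ?_⟩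
        · intro t ht
          exact add_nonneg (hPnn t ht) (hind_nonneg t)
        · intro t ht
          rw [intervalIntegral.integral_of_le ht.1.le]
          by_cases htδ : t ≤ D - δ
          · have heq : EqOn (fun τ => a * Real.exp (b*τ) * (P τ + ind τ))
                (fun τ => a * Real.exp (b*τ) * P τ) (Ioc 0 t) := by
              intro τ hτ
              simp only
              rw [show P τ + ind τ = P τ from hQeqP t htδ hτ]
            rw [setIntegral_congr_fun measurableSet_Ioc heq]
            have h := hPtemp t ht
            rwa [intervalIntegral.integral_of_le ht.1.le] at h
          · push_neg at htδ
            have hbump_w_int : IntegrableOn (fun τ => a * Real.exp (b*τ) * ind τ) (Ioc 0 t) := by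
              rw [hinddef, bump_ind_eq]
              exact ((Continuous.integrableOn_Ioc ((continuous_const.mul
                (Real.continuous_exp.comp (continuous_const.mul continuous_id))).mul
                continuous_const)).indicator measurableSet_Ioc)
            have hsplit : (∫ τ in Ioc (0:ℝ) t, a * Real.exp (b*τ) * (P τ + ind τ))
                = (∫ τ in Ioc (0:ℝ) t, a * Real.exp (b*τ) * P τ)
                  + ∫ τ in Ioc (0:ℝ) t, a * Real.exp (b*τ) * ind τ := by
              rw [← integral_add (hwP_int.mono_set (Ioc_subset_Ioc_right ht.2)) hbump_w_int]
              congr 1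
              funext τ
              ring
            rw [hsplit]
            have h1 : (∫ τ in Ioc (0:ℝ) t, a * Real.exp (b*τ) * P τ)
                ≤ ∫ τ in Ioc (0:ℝ) D, a * Real.exp (b*τ) * P τ :=
              setIntegral_mono_set hwP_int hwP_nn (HasSubset.Subset.eventuallyLE (Ioc_subset_Ioc_right ht.2))
            have h6 : (∫ τ in Ioc (0:ℝ) D, a * Real.exp (b*τ) * P τ) = Tδ * Real.exp (b*D) - η₁ := by
              rw [hη₁def]; ring
            rw [h6] at h1
            have h2 : (∫ τ in Ioc (0:ℝ) t, a * Real.exp (b*τ) * ind τ) ≤ a * Real.exp (b*D) * c * δ := by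
              rw [hinddef]
              exact weighted_bump_le ha hb.le hcpos.le hδpos.le (by linarith)
            have hexp : Real.exp (b*D) * (1 + b*(t-D)) ≤ Real.exp (b*t) := by
              have h4 := Real.add_one_le_exp (b*(t-D))
              have h5 : Real.exp (b*t) = Real.exp (b*D) * Real.exp (b*(t-D)) := by
                rw [← Real.exp_add]; ring_nf
              nlinarith [Real.exp_pos (b*D)]
            have hA : Tδ * (Real.exp (b*D) * (1 + b*(t-D))) ≤ Tδ * Real.exp (b*t) :=
              mul_le_mul_of_nonneg_left hexp hTδ.le
            have hB : Tδ*Real.exp (b*D)*b * (-δ) ≤ Tδ*Real.exp (b*D)*b * (t - D) :=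
              mul_le_mul_of_nonneg_left (show -δ ≤ t - D by linarith) (by positivity)
            nlinarith [hcδ₁, hδb]
        · intro t ht
          rw [intervalIntegral.integral_of_le ht.1.le]
          by_cases htδ : t ≤ D - δ
          · rw [setIntegral_congr_fun measurableSet_Ioc (hQeqP t htδ)]
            have h := hPen t ht
            rwa [intervalIntegral.integral_of_le ht.1.le] at h
          · push_neg at htδ
            have hbump_int : IntegrableOn ind (Ioc 0 t) := by
              rw [hinddef]
              exact (integrableOn_const (C := c) measure_Ioc_lt_top.ne).indicator measurableSet_Ioc
            rw [integral_add (hPint.mono_set (Ioc_subset_Ioc_right ht.2)) hbump_int]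
            have h1 : (∫ τ in Ioc (0:ℝ) t, P τ) ≤ ∫ τ in Ioc (0:ℝ) D, P τ :=
              setIntegral_mono_set hPint hP_nn (HasSubset.Subset.eventuallyLE (Ioc_subset_Ioc_right ht.2))
            have h6 : (∫ τ in Ioc (0:ℝ) D, P τ) = (∑ i, E i) - η₂ := by rw [hη₂def]; ring
            rw [h6] at h1
            have h2 : (∫ τ in Ioc (0:ℝ) t, ind τ) ≤ c * δ := by
              rw [hinddef]
              exact plain_bump_le hcpos.le hδpos.le (by linarith)
            rw [hfilter t (by linarith)]
            linarith
        · rw [intervalIntegral.integral_of_le hD.le, intervalIntegral.integral_of_le hD.le, hinddef]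
          exact throughput_bump D δ c P hPmeas hPnn hδpos (by linarith) hcpos hfint
      · -- CASE B1
        have hbound : ∀ t ∈ Ioo (0:ℝ) D, (∫ τ in Ioc (0:ℝ) t, P τ) ≤ ∑ i, E i := by
          intro t ht
          have h := hPen t ⟨ht.1, ht.2.le⟩
          rw [intervalIntegral.integral_of_le ht.1.le] at h
          exact h.trans (hsum_le t)
        obtain ⟨t₁, ht₁, hne⟩ := exists_nonint D (∑ i, E i) P hPmeas hD hPnn hbound hPint
        set δ := (D - t₁)/2 with hδdef
        have hδpos : 0 < δ := by
          have := ht₁.2; simp only [hδdef]; linarith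
        have hδD : δ ≤ D := by
          have := ht₁.1; simp only [hδdef]; linarith
        have ht₁δ : t₁ < D - δ := by
          have := ht₁.2; simp only [hδdef]; linarith
        have hDδpos : 0 < D - δ := lt_trans ht₁.1 ht₁δ
        set ind : ℝ → ℝ := (Ioc (D-δ) D).indicator (fun _ => (1:ℝ)) with hinddef
        have hind_meas : Measurable ind := measurable_const.indicator measurableSet_Ioc
        have hind_nonneg : ∀ τ, 0 ≤ ind τ := fun τ => Set.indicator_nonneg (fun _ _ => zero_le_one) τ
        have hQmeas : Measurable (fun τ => P τ + ind τ) := hPmeas.add hind_meas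
        have hQeqP : ∀ t : ℝ, t ≤ D - δ → EqOn (fun τ => P τ + ind τ) P (Ioc 0 t) := by
          intro t htle τ hτ
          have : ind τ = 0 := Set.indicator_of_notMem (fun hmem => by linarith [hτ.2, hmem.1]) _
          simp [this]
        have hnonint_t : ∀ t : ℝ, D - δ < t →
            ¬ IntegrableOn (fun τ => P τ + ind τ) (Ioc 0 t) := by
          intro t htgt hI
          apply hne
          have hind_int : IntegrableOn ind (Ioc 0 t) :=
            (integrableOn_const (C := (1:ℝ)) measure_Ioc_lt_top.ne).indicator measurableSet_Ioc
          have h2 := hI.sub hind_int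
          have h3 : ((fun τ => P τ + ind τ) - ind) = P := by
            funext τ; simp only [Pi.sub_apply]; ring
          rw [h3] at h2
          have h4 : IntegrableOn P (Ioc 0 t) volume := h2
          exact h4.mono_set (Ioc_subset_Ioc_right (by linarith [ht₁δ]))
        have hwnonint_t : ∀ t : ℝ, D - δ < t → t ≤ D →
            ¬ IntegrableOn (fun τ => a * Real.exp (b*τ) * (P τ + ind τ)) (Ioc 0 t) := by
          intro t htgt htle hI
          apply hnonint_t t htgt
          apply Integrable.mono' ((hI.abs).const_mul (1/a)) hQmeas.aestronglyMeasurable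
          refine ae_restrict_of_forall_mem measurableSet_Ioc (fun τ hτ => ?_)
          have hexp : 1 ≤ Real.exp (b*τ) := by
            nlinarith [Real.add_one_le_exp (b*τ), mul_pos hb hτ.1]
          rw [Real.norm_eq_abs, abs_mul, abs_mul, abs_of_pos ha, abs_of_pos (Real.exp_pos _)]
          rw [div_mul_eq_mul_div, one_mul, le_div_iff₀ ha]
          nlinarith [mul_le_mul_of_nonneg_right hexp (mul_nonneg ha.le (abs_nonneg (P τ + ind τ)))]
        refine ⟨fun τ => P τ + ind τ, ⟨?_, hQmeas, ?_, ?_⟩, ?_⟩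
        · intro t ht
          exact add_nonneg (hPnn t ht) (hind_nonneg t)
        · intro t ht
          rw [intervalIntegral.integral_of_le ht.1.le]
          by_cases htδ : t ≤ D - δ
          · have heq : EqOn (fun τ => a * Real.exp (b*τ) * (P τ + ind τ))
                (fun τ => a * Real.exp (b*τ) * P τ) (Ioc 0 t) := by
              intro τ hτ
              simp only
              rw [show P τ + ind τ = P τ from hQeqP t htδ hτ]
            rw [setIntegral_congr_fun measurableSet_Ioc heq]
            have h := hPtemp t ht
            rwa [intervalIntegral.integral_of_le ht.1.le] at h
          · push_neg at htδ
            rw [MeasureTheory.integral_undef (by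
              rw [← IntegrableOn]
              exact hwnonint_t t htδ ht.2)]
            positivity
        · intro t ht
          rw [intervalIntegral.integral_of_le ht.1.le]
          by_cases htδ : t ≤ D - δ
          · rw [setIntegral_congr_fun measurableSet_Ioc (hQeqP t htδ)]
            have h := hPen t ht
            rwa [intervalIntegral.integral_of_le ht.1.le] at h
          · push_neg at htδ
            rw [MeasureTheory.integral_undef (by
              rw [← IntegrableOn]
              exact hnonint_t t htδ)]
            exact hsum_nonneg t
        · rw [intervalIntegral.integral_of_le hD.le, intervalIntegral.integral_of_le hD.le]
          exact throughput_bump D δ 1 P hPmeas hPnn hδpos hδD one_pos hfint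
    · -- CASE B2
      have hEpos : 0 < ∑ i, E i :=
        lt_of_le_of_lt (intervalIntegral.integral_nonneg hD.le (fun u hu => hPnn u hu)) henergy
      set δ := min (D/2) ((D - s (Fin.last N))/2) with hδdef
      have hδpos : 0 < δ := lt_min (by positivity) (by linarith)
      have hδD2 : δ ≤ D/2 := min_le_left _ _
      have hδsmax : δ ≤ (D - s (Fin.last N))/2 := min_le_right _ _
      have hsmaxδ : s (Fin.last N) < D - δ := by linarith
      set c := min (Tδ/(a*Real.exp (b*D)*δ)) ((∑ i, E i)/δ) with hcdef
      have hcpos : 0 < c := lt_min (by positivity) (by positivity)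
      have hc₁ : a*Real.exp (b*D)*c*δ ≤ Tδ := by
        have h := min_le_left (Tδ/(a*Real.exp (b*D)*δ)) ((∑ i, E i)/δ)
        rw [← hcdef] at h
        have h2 : a*Real.exp (b*D)*δ*c ≤ a*Real.exp (b*D)*δ*(Tδ/(a*Real.exp (b*D)*δ)) :=
          mul_le_mul_of_nonneg_left h (by positivity)
        have h3 : a*Real.exp (b*D)*δ*(Tδ/(a*Real.exp (b*D)*δ)) = Tδ := by
          field_simp
        nlinarith
      have hc₂ : c*δ ≤ ∑ i, E i := by
        have h := min_le_right (Tδ/(a*Real.exp (b*D)*δ)) ((∑ i, E i)/δ)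
        rw [← hcdef] at h
        have h2 : δ*c ≤ δ*((∑ i, E i)/δ) := mul_le_mul_of_nonneg_left h hδpos.le
        have h3 : δ*((∑ i, E i)/δ) = ∑ i, E i := by field_simp
        nlinarith
      refine ⟨(Ioc (D-δ) D).indicator (fun _ => c), ⟨?_, ?_, ?_, ?_⟩, ?_⟩
      · exact fun t _ => Set.indicator_nonneg (fun _ _ => hcpos.le) t
      · exact measurable_const.indicator measurableSet_Ioc
      · intro t ht
        rw [intervalIntegral.integral_of_le ht.1.le]
        calc (∫ τ in Ioc (0:ℝ) t, a * Real.exp (b*τ) * (Ioc (D-δ) D).indicator (fun _ => c) τ)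
            ≤ a * Real.exp (b*D) * c * δ :=
              weighted_bump_le ha hb.le hcpos.le hδpos.le (by linarith)
          _ ≤ Tδ := hc₁
          _ ≤ Tδ * Real.exp (b*t) := by
              nlinarith [Real.add_one_le_exp (b*t), mul_pos hb ht.1]
      · intro t ht
        rw [intervalIntegral.integral_of_le ht.1.le]
        by_cases htδ : t ≤ D - δ
        · have : ∀ τ ∈ Ioc (0:ℝ) t, (Ioc (D-δ) D).indicator (fun _ => c) τ = 0 := by
            intro τ hτ
            apply Set.indicator_of_notMem
            intro hmem
            linarith [hτ.2, hmem.1]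
          rw [setIntegral_congr_fun measurableSet_Ioc this]
          simpa using hsum_nonneg t
        · push_neg at htδ
          rw [hfilter t (by linarith)]
          calc (∫ τ in Ioc (0:ℝ) t, (Ioc (D-δ) D).indicator (fun _ => c) τ)
              ≤ c * δ := plain_bump_le hcpos.le hδpos.le (by linarith)
            _ ≤ ∑ i, E i := hc₂
      · have hLHS : (∫ τ in (0:ℝ)..D, (1/2 : ℝ) * Real.log (1 + P τ)) = 0 := by
          apply intervalIntegral.integral_undef
          rw [intervalIntegrable_iff_integrableOn_Ioc_of_le hD.le]
          exact hfint
        rw [hLHS, intervalIntegral.integral_of_le hD.le]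
        have hQfun : (fun τ => (1/2 : ℝ) * Real.log (1 + (Ioc (D-δ) D).indicator (fun _ => c) τ))
            = (Ioc (D-δ) D).indicator (fun _ => (1/2 : ℝ)*Real.log (1+c)) := by
          funext τ
          by_cases hτ : τ ∈ Ioc (D-δ) D
          · simp [Set.indicator_of_mem hτ]
          · simp [Set.indicator_of_notMem hτ]
        rw [hQfun, MeasureTheory.setIntegral_indicator measurableSet_Ioc, setIntegral_const]
        have hinter : Ioc (0:ℝ) D ∩ Ioc (D-δ) D = Ioc (D-δ) D :=
          inter_eq_self_of_subset_right (Ioc_subset_Ioc_left (by linarith))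
        rw [hinter, measureReal_def, Real.volume_Ioc, show D - (D-δ) = δ by ring, ENNReal.toReal_ofReal hδpos.le,
          smul_eq_mul]
        have hlog : 0 < Real.log (1+c) := Real.log_pos (by linarith)
        positivity
  obtain ⟨Q, hQfeas, hQlt⟩ := main
  exact ⟨⟨Q, hQfeas, hQlt⟩, fun hall => absurd (hall Q hQfeas) (not_le.mpr hQlt)⟩
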